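/- Let q = 2^m with m ≥ 3. For any two distinct fixed elements x_1, x_2 ∈ F_q^*, the number of unordered pairs {x_3, x_4} of elements making x_1, x_2, x_3, x_4 pairwise distinct nonzero elements of F_q and the 4×4 matrix with rows (1,1,1,1), (x_1^2,...,x_4^2), (x_1^3,...,x_4^3), (x_1^4,...,x_4^4) singular equals (q-4)/2. -/

import Mathlib

private noncomputable def Mob {F : Type*} [Field F] (x₁ x₂ x : F) : F :=
  x₁ * x₂ * x / ((x₁ + x₂) * x + x₁ * x₂)

private lemma det_factor {F : Type*} [Field F] (x₁ x₂ x₃ x₄ : F) :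
    Matrix.det !![1, 1, 1, 1;
                  x₁^2, x₂^2, x₃^2, x₄^2;
                  x₁^3, x₂^3, x₃^3, x₄^3;
                  x₁^4, x₂^4, x₃^4, x₄^4] =
    (x₂-x₁)*((x₃-x₁)*((x₄-x₁)*((x₃-x₂)*((x₄-x₂)*((x₄-x₃)*
      (x₁*x₂*x₃+x₁*x₂*x₄+x₁*x₃*x₄+x₂*x₃*x₄)))))) := by
  rw [Matrix.det_succ_row_zero]
  simp [Fin.sum_univ_succ, Matrix.det_fin_three, Fin.succAbove,
    Fin.castSucc, Fin.castAdd, Fin.castLE]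
  ring

theorem stmt13 (m : ℕ) (hm : 3 ≤ m)
    (F : Type*) [Field F] [Fintype F] [DecidableEq F]
    (hF : Fintype.card F = 2 ^ m)
    (x₁ x₂ : F) (h1 : x₁ ≠ 0) (h2 : x₂ ≠ 0) (h12 : x₁ ≠ x₂) :
    {s : Finset F | ∃ x₃ x₄ : F, s = {x₃, x₄} ∧ x₃ ≠ x₄ ∧
      x₃ ≠ 0 ∧ x₄ ≠ 0 ∧ x₃ ≠ x₁ ∧ x₃ ≠ x₂ ∧ x₄ ≠ x₁ ∧ x₄ ≠ x₂ ∧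
      Matrix.det !![1, 1, 1, 1;
                    x₁^2, x₂^2, x₃^2, x₄^2;
                    x₁^3, x₂^3, x₃^3, x₄^3;
                    x₁^4, x₂^4, x₃^4, x₄^4] = 0}.ncard
      = (2 ^ m - 4) / 2 := by
  classical
  -- characteristic 2
  have hchar : (2 : F) = 0 := by
    have h0 : ((Fintype.card F : ℕ) : F) = 0 := FiniteField.cast_card_eq_zero F
    rw [hF] at h0
    push_cast at h0
    exact (pow_eq_zero_iff (by omega)).mp h0
  have ha : x₁ + x₂ ≠ 0 := by
    intro h
    exact h12 (by linear_combination h - x₂ * hchar)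
  have hb : x₁ * x₂ ≠ 0 := mul_ne_zero h1 h2
  set c : F := (x₁ * x₂) / (x₁ + x₂) with hc_def
  have hc : (x₁ + x₂) * c = x₁ * x₂ := mul_div_cancel₀ _ ha
  have hc0 : c ≠ 0 := div_ne_zero hb ha
  have hcx₁ : c ≠ x₁ := by
    intro h
    rw [h] at hc
    have : x₁ ^ 2 = 0 := by linear_combination hc
    exact h1 ((pow_eq_zero_iff two_ne_zero).mp this)
  have hcx₂ : c ≠ x₂ := by
    intro h
    rw [h] at hc
    have : x₂ ^ 2 = 0 := by linear_combination hc
    exact h2 ((pow_eq_zero_iff two_ne_zero).mp this)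
  set M : F → F := Mob x₁ x₂ with hM_def
  -- denominator nonzero away from c
  have hden : ∀ x : F, x ≠ c → (x₁ + x₂) * x + x₁ * x₂ ≠ 0 := by
    intro x hx hz
    apply hx
    rw [hc_def, eq_div_iff ha]
    linear_combination hz - (x₁ * x₂) * hchar
  have hMkey : ∀ x : F, x ≠ c → M x * ((x₁ + x₂) * x + x₁ * x₂) = x₁ * x₂ * x := by
    intro x hx
    rw [hM_def, Mob]
    exact div_mul_cancel₀ _ (hden x hx)
  set A : Finset F := Finset.univ \ {0, x₁, x₂, c} with hA_def
  have hAmem : ∀ x : F, x ∈ A ↔ x ≠ 0 ∧ x ≠ x₁ ∧ x ≠ x₂ ∧ x ≠ c := by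
    intro x
    simp [hA_def, not_or]
  -- properties of M on A
  have hMprop : ∀ x : F, x ∈ A → M x ∈ A ∧ M x ≠ x ∧ M (M x) = x := by
    intro x hx
    rw [hAmem] at hx
    obtain ⟨hx0, hxx₁, hxx₂, hxc⟩ := hx
    have hd := hden x hxc
    have hk := hMkey x hxc
    have hM0 : M x ≠ 0 := by
      intro h
      rw [h, zero_mul] at hk
      exact mul_ne_zero hb hx0 hk.symm
    have hMx₁ : M x ≠ x₁ := by
      intro h
      rw [h] at hk
      have hsq : x₁ ^ 2 * (x + x₂) = 0 := by linear_combination hk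
      rcases mul_eq_zero.mp hsq with h' | h'
      · exact h1 ((pow_eq_zero_iff two_ne_zero).mp h')
      · exact hxx₂ (by linear_combination h' - x₂ * hchar)
    have hMx₂ : M x ≠ x₂ := by
      intro h
      rw [h] at hk
      have hsq : x₂ ^ 2 * (x + x₁) = 0 := by linear_combination hk
      rcases mul_eq_zero.mp hsq with h' | h'
      · exact h2 ((pow_eq_zero_iff two_ne_zero).mp h')
      · exact hxx₁ (by linear_combination h' - x₁ * hchar)
    have hMc : M x ≠ c := by
      intro h
      have hcc : (x₁ + x₂) * M x = x₁ * x₂ := by rw [h]; exact hc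
      have : (x₁ * x₂) ^ 2 = 0 := by
        linear_combination (x₁ + x₂) * hk - ((x₁ + x₂) * x + x₁ * x₂) * hcc
      exact hb ((pow_eq_zero_iff two_ne_zero).mp this)
    have hMne : M x ≠ x := by
      intro h
      rw [h] at hk
      have : (x₁ + x₂) * x ^ 2 = 0 := by linear_combination hk
      rcases mul_eq_zero.mp this with h' | h'
      · exact ha h'
      · exact hx0 ((pow_eq_zero_iff two_ne_zero).mp h')
    refine ⟨(hAmem _).mpr ⟨hM0, hMx₁, hMx₂, hMc⟩, hMne, ?_⟩
    have hdy := hden (M x) hMc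
    have hky := hMkey (M x) hMc
    apply mul_right_cancel₀ hdy
    rw [hky]
    linear_combination hk - (x₁ + x₂) * x * M x * hchar
  -- the set equals the image of A under x ↦ {x, M x}
  have hset : {s : Finset F | ∃ x₃ x₄ : F, s = {x₃, x₄} ∧ x₃ ≠ x₄ ∧
      x₃ ≠ 0 ∧ x₄ ≠ 0 ∧ x₃ ≠ x₁ ∧ x₃ ≠ x₂ ∧ x₄ ≠ x₁ ∧ x₄ ≠ x₂ ∧
      Matrix.det !![1, 1, 1, 1;
                    x₁^2, x₂^2, x₃^2, x₄^2;
                    x₁^3, x₂^3, x₃^3, x₄^3;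
                    x₁^4, x₂^4, x₃^4, x₄^4] = 0}
      = ↑(A.image (fun x => ({x, M x} : Finset F))) := by
    ext s
    simp only [Set.mem_setOf_eq, Finset.coe_image, Set.mem_image, Finset.mem_coe]
    constructor
    · rintro ⟨x₃, x₄, rfl, h34, h30, h40, h31, h32, h41, h42, hdet⟩
      rw [det_factor] at hdet
      have he3 : x₁*x₂*x₃ + x₁*x₂*x₄ + x₁*x₃*x₄ + x₂*x₃*x₄ = 0 := by
        have f1 : x₂ - x₁ ≠ 0 := sub_ne_zero_of_ne (Ne.symm h12)
        have f2 : x₃ - x₁ ≠ 0 := sub_ne_zero_of_ne h31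
        have f3 : x₄ - x₁ ≠ 0 := sub_ne_zero_of_ne h41
        have f4 : x₃ - x₂ ≠ 0 := sub_ne_zero_of_ne h32
        have f5 : x₄ - x₂ ≠ 0 := sub_ne_zero_of_ne h42
        have f6 : x₄ - x₃ ≠ 0 := sub_ne_zero_of_ne (Ne.symm h34)
        rcases mul_eq_zero.mp hdet with h | h
        · exact absurd h f1
        rcases mul_eq_zero.mp h with h | h
        · exact absurd h f2
        rcases mul_eq_zero.mp h with h | h
        · exact absurd h f3
        rcases mul_eq_zero.mp h with h | h
        · exact absurd h f4
        rcases mul_eq_zero.mp h with h | h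
        · exact absurd h f5
        rcases mul_eq_zero.mp h with h | h
        · exact absurd h f6
        exact h
      have h3c : x₃ ≠ c := by
        intro h
        have hz : (x₁ + x₂) * x₃ = x₁ * x₂ := by rw [h]; exact hc
        have : x₁ * x₂ * x₃ = 0 := by
          linear_combination he3 - x₄ * hz - x₁ * x₂ * x₄ * hchar
        exact (mul_ne_zero hb h30) this
      refine ⟨x₃, (hAmem _).mpr ⟨h30, h31, h32, h3c⟩, ?_⟩
      have hk := hMkey x₃ h3c
      have : M x₃ = x₄ := by
        apply mul_right_cancel₀ (hden x₃ h3c)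
        rw [hk]
        linear_combination -he3 + x₁ * x₂ * x₃ * hchar
      rw [this]
    · rintro ⟨x, hxA, rfl⟩
      obtain ⟨hMA, hMne, _⟩ := hMprop x hxA
      rw [hAmem] at hxA hMA
      obtain ⟨hx0, hxx₁, hxx₂, hxc⟩ := hxA
      obtain ⟨hM0, hMx₁, hMx₂, _⟩ := hMA
      refine ⟨x, M x, rfl, Ne.symm hMne, hx0, hM0, hxx₁, hxx₂, hMx₁, hMx₂, ?_⟩
      rw [det_factor]
      have hk := hMkey x hxc
      have he3 : x₁*x₂*x + x₁*x₂*(M x) + x₁*x*(M x) + x₂*x*(M x) = 0 := by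
        linear_combination hk + x₁ * x₂ * x * hchar
      rw [he3]
      ring
  rw [hset, Set.ncard_coe_finset]
  -- cardinality computation
  have hAcard : A.card = 2 ^ m - 4 := by
    have h4 : ({0, x₁, x₂, c} : Finset F).card = 4 := by
      rw [Finset.card_insert_of_notMem (by simp [Ne.symm h1, Ne.symm h2, Ne.symm hc0]),
        Finset.card_insert_of_notMem (by simp [h12, Ne.symm hcx₁]),
        Finset.card_insert_of_notMem (by simp [Ne.symm hcx₂]),
        Finset.card_singleton]
    rw [hA_def, Finset.card_sdiff_of_subset (Finset.subset_univ _), h4, Finset.card_univ, hF]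
  have hfib : ∀ t ∈ A.image (fun x => ({x, M x} : Finset F)),
      (A.filter (fun z => ({z, M z} : Finset F) = t)).card = 2 := by
    intro t ht
    obtain ⟨x, hxA, rfl⟩ := Finset.mem_image.mp ht
    obtain ⟨hMA, hMne, hMM⟩ := hMprop x hxA
    have : (A.filter (fun z => ({z, M z} : Finset F) = {x, M x})) = {x, M x} := by
      ext z
      simp only [Finset.mem_filter, Finset.mem_insert, Finset.mem_singleton]
      constructor
      · rintro ⟨hzA, hz⟩
        have : z ∈ ({z, M z} : Finset F) := Finset.mem_insert_self _ _
        rw [hz] at this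
        simpa using this
      · rintro (rfl | rfl)
        · exact ⟨hxA, rfl⟩
        · refine ⟨hMA, ?_⟩
          rw [hMM, Finset.pair_comm]
    rw [this, Finset.card_insert_of_notMem (by simpa using Ne.symm hMne),
      Finset.card_singleton]
  have hsum := Finset.card_eq_sum_card_image (fun x => ({x, M x} : Finset F)) A
  rw [Finset.sum_congr rfl hfib, Finset.sum_const, smul_eq_mul] at hsum
  have hq8 : 8 ≤ 2 ^ m := by
    calc (8 : ℕ) = 2 ^ 3 := rfl
    _ ≤ 2 ^ m := Nat.pow_le_pow_right (by norm_num) hm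
  omega
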